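/- For every integer n ≥ 4, the neighbourhood of the vertex (0,0) in Γ(n) is the disjoint union of the three sets C₁ = {(i,0) : 1 ≤ i ≤ n−1}, C₂ = {(0,i) : 1 ≤ i ≤ n−1} and C₃ = {(i,i) : 1 ≤ i ≤ n−1}, each of size n−1; each Cₖ is a clique of Γ(n), and each Cₖ is a maximal clique of the subgraph of Γ(n) induced on the neighbourhood of (0,0) (i.e., no vertex of the neighbourhood outside Cₖ is adjacent to every vertex of Cₖ). -/

import Mathlib

/-- The connection set `S = {(i,0), (0,i), (i,i) : 1 ≤ i ≤ n-1}` of `ℤ_n × ℤ_n`. -/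
def cayS (n : ℕ) : Set (ZMod n × ZMod n) :=
  {p | p ≠ 0 ∧ (p.2 = 0 ∨ p.1 = 0 ∨ p.1 = p.2)}

/-- The Cayley graph `Γ(n) = Cay(ℤ_n × ℤ_n; S)`. -/
def Gamma (n : ℕ) : SimpleGraph (ZMod n × ZMod n) where
  Adj x y := x ≠ y ∧ x - y ∈ cayS n
  symm := by
    constructor
    rintro x y ⟨hxy, hne, h⟩
    refine ⟨Ne.symm hxy, sub_ne_zero_of_ne (Ne.symm hxy), ?_⟩
    simp only [Prod.fst_sub, Prod.snd_sub] at h ⊢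
    rcases h with h | h | h
    · exact Or.inl (by linear_combination -h)
    · exact Or.inr (Or.inl (by linear_combination -h))
    · exact Or.inr (Or.inr (by linear_combination -h))
  loopless := ⟨fun x h => h.1 rfl⟩

/-- `C₁ = {(i,0) : 1 ≤ i ≤ n-1}`. -/
def C1 (n : ℕ) : Set (ZMod n × ZMod n) := {p | p.2 = 0 ∧ p.1 ≠ 0}

/-- `C₂ = {(0,i) : 1 ≤ i ≤ n-1}`. -/
def C2 (n : ℕ) : Set (ZMod n × ZMod n) := {p | p.1 = 0 ∧ p.2 ≠ 0}

/-- `C₃ = {(i,i) : 1 ≤ i ≤ n-1}`. -/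
def C3 (n : ℕ) : Set (ZMod n × ZMod n) := {p | p.1 = p.2 ∧ p.1 ≠ 0}

lemma gamma_adj {n : ℕ} (x y : ZMod n × ZMod n) :
    (Gamma n).Adj x y ↔ x ≠ y ∧ (x - y ≠ 0 ∧
      ((x - y).2 = 0 ∨ (x - y).1 = 0 ∨ (x - y).1 = (x - y).2)) := Iff.rfl

lemma exists_third {n : ℕ} (hn : 3 ≤ n) (a : ZMod n) :
    ∃ c : ZMod n, c ≠ 0 ∧ c ≠ a := by
  haveI : NeZero n := ⟨by omega⟩
  by_contra h
  push_neg at h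
  have hsub : (Finset.univ : Finset (ZMod n)) ⊆ {0, a} := by
    intro c _
    rcases eq_or_ne c 0 with rfl | h0
    · simp
    · simp [h c h0]
  have hc := Finset.card_le_card hsub
  have h2 : ({0, a} : Finset (ZMod n)).card ≤ 2 :=
    le_trans (Finset.card_insert_le _ _) (by simp)
  simp only [Finset.card_univ, ZMod.card] at hc
  omega

lemma ncard_ne_zero_set (n : ℕ) [NeZero n] : {i : ZMod n | i ≠ 0}.ncard = n - 1 := by
  classical
  have h : {i : ZMod n | i ≠ 0} = ({(0 : ZMod n)}ᶜ : Set (ZMod n)) := by ext; simp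
  rw [h, Set.ncard_eq_toFinset_card', Set.toFinset_compl, Set.toFinset_singleton,
    Finset.card_compl, Finset.card_singleton, Fintype.card_eq_nat_card, Nat.card_zmod]

/-- For `n ≥ 4`, the neighbourhood of `(0,0)` in `Γ(n)` is the disjoint
union of `C₁`, `C₂`, `C₃`, each of size `n-1`; each `Cₖ` is a clique, and each `Cₖ` is a
maximal clique of the subgraph induced on the neighbourhood of `(0,0)`. -/
theorem Gamma_neighborhood_structure (n : ℕ) (hn : 4 ≤ n) :
    (Gamma n).neighborSet (0, 0) = C1 n ∪ C2 n ∪ C3 n ∧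
    Disjoint (C1 n) (C2 n) ∧ Disjoint (C1 n) (C3 n) ∧ Disjoint (C2 n) (C3 n) ∧
    (C1 n).ncard = n - 1 ∧ (C2 n).ncard = n - 1 ∧ (C3 n).ncard = n - 1 ∧
    (Gamma n).IsClique (C1 n) ∧ (Gamma n).IsClique (C2 n) ∧ (Gamma n).IsClique (C3 n) ∧
    (∀ v ∈ (Gamma n).neighborSet (0, 0), v ∉ C1 n → ∃ w ∈ C1 n, ¬ (Gamma n).Adj v w) ∧
    (∀ v ∈ (Gamma n).neighborSet (0, 0), v ∉ C2 n → ∃ w ∈ C2 n, ¬ (Gamma n).Adj v w) ∧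
    (∀ v ∈ (Gamma n).neighborSet (0, 0), v ∉ C3 n → ∃ w ∈ C3 n, ¬ (Gamma n).Adj v w) := by
  haveI : NeZero n := ⟨by omega⟩
  have h3 : 3 ≤ n := by omega
  have hN : (Gamma n).neighborSet (0, 0) = C1 n ∪ C2 n ∪ C3 n := by
    ext ⟨a, b⟩
    constructor
    · rintro ⟨h0, -, hor⟩
      have hor' : (0 : ZMod n) - b = 0 ∨ (0 : ZMod n) - a = 0 ∨
          (0 : ZMod n) - a = 0 - b := hor
      rcases hor' with h | h | h
      · have hb : b = 0 := by linear_combination -h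
        exact Or.inl (Or.inl ⟨hb, fun ha => h0 (by simp [show a = 0 from ha, hb])⟩)
      · have ha : a = 0 := by linear_combination -h
        exact Or.inl (Or.inr ⟨ha, fun hb => h0 (by simp [ha, show b = 0 from hb])⟩)
      · have hab : a = b := by linear_combination -h
        exact Or.inr ⟨hab, fun ha => h0 (by simp [show a = 0 from ha, ← hab])⟩
    · rintro ((⟨hb, ha⟩ | ⟨ha, hb⟩) | ⟨hab, ha⟩)
      · have hne : ((0, 0) : ZMod n × ZMod n) ≠ (a, b) :=
          fun h => ha (congrArg Prod.fst h).symm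
        exact ⟨hne, sub_ne_zero_of_ne hne,
          Or.inl (show (0 : ZMod n) - b = 0 by rw [show b = 0 from hb, sub_zero])⟩
      · have hne : ((0, 0) : ZMod n × ZMod n) ≠ (a, b) :=
          fun h => hb (congrArg Prod.snd h).symm
        exact ⟨hne, sub_ne_zero_of_ne hne,
          Or.inr (Or.inl (show (0 : ZMod n) - a = 0 by rw [show a = 0 from ha, sub_zero]))⟩
      · have hne : ((0, 0) : ZMod n × ZMod n) ≠ (a, b) :=
          fun h => ha (congrArg Prod.fst h).symm
        exact ⟨hne, sub_ne_zero_of_ne hne,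
          Or.inr (Or.inr (show (0 : ZMod n) - a = 0 - b by rw [show a = b from hab]))⟩
  have hC1 : C1 n = (fun i : ZMod n => ((i, 0) : ZMod n × ZMod n)) '' {i | i ≠ 0} := by
    ext ⟨a, b⟩
    constructor
    · rintro ⟨hb, ha⟩; exact ⟨a, ha, Prod.ext rfl (show (0 : ZMod n) = b from hb.symm)⟩
    · rintro ⟨i, hi, h⟩; cases h; exact ⟨rfl, hi⟩
  have hC2 : C2 n = (fun i : ZMod n => ((0, i) : ZMod n × ZMod n)) '' {i | i ≠ 0} := by
    ext ⟨a, b⟩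
    constructor
    · rintro ⟨ha, hb⟩; exact ⟨b, hb, Prod.ext (show (0 : ZMod n) = a from ha.symm) rfl⟩
    · rintro ⟨i, hi, h⟩; cases h; exact ⟨rfl, hi⟩
  have hC3 : C3 n = (fun i : ZMod n => ((i, i) : ZMod n × ZMod n)) '' {i | i ≠ 0} := by
    ext ⟨a, b⟩
    constructor
    · rintro ⟨hab, ha⟩; exact ⟨a, ha, Prod.ext rfl (show a = b from hab)⟩
    · rintro ⟨i, hi, h⟩; cases h; exact ⟨rfl, hi⟩
  refine ⟨hN, ?_, ?_, ?_, ?_, ?_, ?_, ?_, ?_, ?_, ?_, ?_, ?_⟩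
  · rw [Set.disjoint_left]
    rintro ⟨a, b⟩ ⟨hb, ha⟩ ⟨ha', hb'⟩
    exact ha ha'
  · rw [Set.disjoint_left]
    rintro ⟨a, b⟩ ⟨hb, ha⟩ ⟨hab, ha'⟩
    exact ha' ((show a = b from hab).trans hb)
  · rw [Set.disjoint_left]
    rintro ⟨a, b⟩ ⟨ha, hb⟩ ⟨hab, ha'⟩
    exact ha' ha
  · rw [hC1, Set.ncard_image_of_injective _ (fun i j h => (Prod.ext_iff.mp h).1),
      ncard_ne_zero_set]
  · rw [hC2, Set.ncard_image_of_injective _ (fun i j h => (Prod.ext_iff.mp h).2),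
      ncard_ne_zero_set]
  · rw [hC3, Set.ncard_image_of_injective _ (fun i j h => (Prod.ext_iff.mp h).1),
      ncard_ne_zero_set]
  · rintro ⟨a, b⟩ ⟨hb, ha⟩ ⟨c, d⟩ ⟨hd, hc⟩ hne
    exact ⟨hne, sub_ne_zero_of_ne hne,
      Or.inl (show b - d = 0 by rw [show b = 0 from hb, show d = 0 from hd, sub_zero])⟩
  · rintro ⟨a, b⟩ ⟨ha, hb⟩ ⟨c, d⟩ ⟨hc, hd⟩ hne
    exact ⟨hne, sub_ne_zero_of_ne hne,
      Or.inr (Or.inl (show a - c = 0 by rw [show a = 0 from ha, show c = 0 from hc, sub_zero]))⟩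
  · rintro ⟨a, b⟩ ⟨hab, ha⟩ ⟨c, d⟩ ⟨hcd, hc⟩ hne
    exact ⟨hne, sub_ne_zero_of_ne hne,
      Or.inr (Or.inr (show a - c = b - d by rw [show a = b from hab, show c = d from hcd]))⟩
  · -- C1 maximal
    rintro ⟨a, b⟩ hv hv1
    rw [hN] at hv
    rcases hv with (hv | hv) | hv
    · exact absurd hv hv1
    · obtain ⟨ha, hb⟩ := hv
      have ha' : a = 0 := ha
      have hb' : b ≠ 0 := hb
      obtain ⟨c, hc0, hc1⟩ := exists_third h3 (-b)
      refine ⟨(c, 0), ⟨rfl, hc0⟩, ?_⟩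
      rintro ⟨-, -, hor⟩
      have hor' : b - 0 = 0 ∨ a - c = 0 ∨ a - c = b - 0 := hor
      rcases hor' with h | h | h
      · exact hb' (by linear_combination h)
      · exact hc0 (by linear_combination ha' - h)
      · exact hc1 (by linear_combination ha' - h)
    · obtain ⟨hab, ha⟩ := hv
      have hab' : a = b := hab
      have ha' : a ≠ 0 := ha
      obtain ⟨c, hc0, hc1⟩ := exists_third h3 a
      refine ⟨(c, 0), ⟨rfl, hc0⟩, ?_⟩
      rintro ⟨-, -, hor⟩
      have hor' : b - 0 = 0 ∨ a - c = 0 ∨ a - c = b - 0 := hor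
      rcases hor' with h | h | h
      · exact ha' (by linear_combination hab' + h)
      · exact hc1 (by linear_combination -h)
      · exact hc0 (by linear_combination hab' - h)
  · -- C2 maximal
    rintro ⟨a, b⟩ hv hv2
    rw [hN] at hv
    rcases hv with (hv | hv) | hv
    · obtain ⟨hb, ha⟩ := hv
      have hb' : b = 0 := hb
      have ha' : a ≠ 0 := ha
      obtain ⟨c, hc0, hc1⟩ := exists_third h3 (-a)
      refine ⟨(0, c), ⟨rfl, hc0⟩, ?_⟩
      rintro ⟨-, -, hor⟩
      have hor' : b - c = 0 ∨ a - 0 = 0 ∨ a - 0 = b - c := hor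
      rcases hor' with h | h | h
      · exact hc0 (by linear_combination hb' - h)
      · exact ha' (by linear_combination h)
      · exact hc1 (by linear_combination h + hb')
    · exact absurd hv hv2
    · obtain ⟨hab, ha⟩ := hv
      have hab' : a = b := hab
      have ha' : a ≠ 0 := ha
      obtain ⟨c, hc0, hc1⟩ := exists_third h3 a
      refine ⟨(0, c), ⟨rfl, hc0⟩, ?_⟩
      rintro ⟨-, -, hor⟩
      have hor' : b - c = 0 ∨ a - 0 = 0 ∨ a - 0 = b - c := hor
      rcases hor' with h | h | h
      · exact hc1 (by linear_combination -hab' - h)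
      · exact ha' (by linear_combination h)
      · exact hc0 (by linear_combination h - hab')
  · -- C3 maximal
    rintro ⟨a, b⟩ hv hv3
    rw [hN] at hv
    rcases hv with (hv | hv) | hv
    · obtain ⟨hb, ha⟩ := hv
      have hb' : b = 0 := hb
      have ha' : a ≠ 0 := ha
      obtain ⟨c, hc0, hc1⟩ := exists_third h3 a
      refine ⟨(c, c), ⟨rfl, hc0⟩, ?_⟩
      rintro ⟨-, -, hor⟩
      have hor' : b - c = 0 ∨ a - c = 0 ∨ a - c = b - c := hor
      rcases hor' with h | h | h
      · exact hc0 (by linear_combination hb' - h)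
      · exact hc1 (by linear_combination -h)
      · exact ha' (by linear_combination h + hb')
    · obtain ⟨ha, hb⟩ := hv
      have ha' : a = 0 := ha
      have hb' : b ≠ 0 := hb
      obtain ⟨c, hc0, hc1⟩ := exists_third h3 b
      refine ⟨(c, c), ⟨rfl, hc0⟩, ?_⟩
      rintro ⟨-, -, hor⟩
      have hor' : b - c = 0 ∨ a - c = 0 ∨ a - c = b - c := hor
      rcases hor' with h | h | h
      · exact hc1 (by linear_combination -h)
      · exact hc0 (by linear_combination ha' - h)
      · exact hb' (by linear_combination ha' - h)
    · exact absurd hv hv3
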